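/- Let Q : ℝ^d → [0,1] be measurable with ∫ Q^p < ∞ for an integer p ≥ 1, and define the operator T on L²(ℝ^d) by (Tg)(λ) = √(Q(λ)) ∫_{ℝ^d} f(γ−λ) √(Q(γ)) g(γ) dγ, where f ≥ 0 is continuous with f(−λ)=f(λ) and ‖f‖_q = 1 for q the conjugate exponent of p. Then for all g, h ∈ L²(ℝ^d), ⟨h, Tg⟩ ≤ ‖Q‖_p ‖g‖₂ ‖h‖₂; in particular T is a bounded self-adjoint operator on L²(ℝ^d). -/

import Mathlib

open MeasureTheory Real
open scoped ENNReal

lemma alg_helper {P : ℝ} (hP : 0 < P) (R Yh Yg : ℝ≥0∞) :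
    ((R * Yh ^ P) ^ ((2:ℝ)⁻¹) * (R * Yg ^ P) ^ ((2:ℝ)⁻¹)) ^ (1/P)
      = R ^ (1/P) * (Yh ^ ((2:ℝ)⁻¹) * Yg ^ ((2:ℝ)⁻¹)) := by
  rw [ENNReal.mul_rpow_of_nonneg R _ (by positivity), ENNReal.mul_rpow_of_nonneg R _ (by positivity),
    mul_mul_mul_comm, ← ENNReal.rpow_add_of_nonneg _ _ (by positivity) (by positivity)]
  have h1 : (2:ℝ)⁻¹ + (2:ℝ)⁻¹ = 1 := by norm_num
  rw [h1, ENNReal.rpow_one,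
    ENNReal.mul_rpow_of_nonneg _ _ (by positivity), ENNReal.mul_rpow_of_nonneg _ _ (by positivity),
    ← ENNReal.rpow_mul Yh, ← ENNReal.rpow_mul Yg, ← ENNReal.rpow_mul Yh, ← ENNReal.rpow_mul Yg]
  have h2 : P * 2⁻¹ * (1 / P) = 1/2 := by field_simp
  rw [h2]
  norm_num



lemma jensen_step {d : ℕ} {P : ℝ} (hP : 1 < P)
    (ρ w : EuclideanSpace ℝ (Fin d) → ℝ≥0∞) (hρ : Measurable ρ) (hw : Measurable w) :
    ∫⁻ u, (∫⁻ l, ρ (l + u) * w l) ^ P ≤ (∫⁻ x, ρ x ^ P) * (∫⁻ l, w l) ^ P := by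
  have hP0 : (0:ℝ) < P := lt_trans one_pos hP
  have hpq : P.HolderConjugate (P/(P-1)) := Real.HolderConjugate.conjExponent hP
  set P' : ℝ := P/(P-1) with hP'
  have hP'0 : (0:ℝ) < P' := hpq.symm.pos
  set Y : ℝ≥0∞ := ∫⁻ l, w l with hY
  set R : ℝ≥0∞ := ∫⁻ x, ρ x ^ P with hR
  have key : ∀ u : EuclideanSpace ℝ (Fin d),
      (∫⁻ l, ρ (l + u) * w l) ≤ (∫⁻ l, ρ (l + u) ^ P * w l) ^ (1/P) * Y ^ (1/P') := by
    intro u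
    have hm1 : AEMeasurable (fun l => ρ (l + u) * w l ^ (1/P)) volume :=
      ((hρ.comp (measurable_id.add_const u)).mul (hw.pow_const _)).aemeasurable
    have hm2 : AEMeasurable (fun l => w l ^ (1/P')) volume := (hw.pow_const _).aemeasurable
    have H := ENNReal.lintegral_mul_le_Lp_mul_Lq volume hpq hm1 hm2
    calc (∫⁻ l, ρ (l + u) * w l)
        = ∫⁻ l, ((fun l => ρ (l + u) * w l ^ (1/P)) * fun l => w l ^ (1/P')) l := by
          refine lintegral_congr fun l => ?_
          simp only [Pi.mul_apply]
          rw [mul_assoc, ← ENNReal.rpow_add_of_nonneg _ _ (by positivity) (by positivity),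
            one_div, one_div, hpq.inv_add_inv_eq_one, ENNReal.rpow_one]
      _ ≤ (∫⁻ l, (ρ (l + u) * w l ^ (1/P)) ^ P) ^ (1/P) * (∫⁻ l, (w l ^ (1/P')) ^ P') ^ (1/P') :=
          H
      _ = (∫⁻ l, ρ (l + u) ^ P * w l) ^ (1/P) * Y ^ (1/P') := by
          congr 1
          · refine congrArg (· ^ (1/P)) (lintegral_congr fun l => ?_)
            rw [ENNReal.mul_rpow_of_nonneg _ _ hP0.le, ← ENNReal.rpow_mul,
              one_div_mul_cancel hP0.ne', ENNReal.rpow_one]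
          · refine congrArg (· ^ (1/P')) (lintegral_congr fun l => ?_)
            rw [← ENNReal.rpow_mul, one_div_mul_cancel hP'0.ne', ENNReal.rpow_one]
  have meas_prod : Measurable (fun z : EuclideanSpace ℝ (Fin d) × EuclideanSpace ℝ (Fin d) =>
      ρ (z.2 + z.1) ^ P * w z.2) :=
    ((hρ.comp (measurable_snd.add measurable_fst)).pow_const _).mul (hw.comp measurable_snd)
  calc ∫⁻ u, (∫⁻ l, ρ (l + u) * w l) ^ P
      ≤ ∫⁻ u, ((∫⁻ l, ρ (l + u) ^ P * w l) ^ (1/P) * Y ^ (1/P')) ^ P := by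
        exact lintegral_mono fun u => ENNReal.rpow_le_rpow (key u) hP0.le
    _ = ∫⁻ u, (∫⁻ l, ρ (l + u) ^ P * w l) * Y ^ (P/P') := by
        refine lintegral_congr fun u => ?_
        rw [ENNReal.mul_rpow_of_nonneg _ _ hP0.le, ← ENNReal.rpow_mul, ← ENNReal.rpow_mul,
          one_div_mul_cancel hP0.ne', ENNReal.rpow_one, one_div, inv_mul_eq_div]
    _ = (∫⁻ u, ∫⁻ l, ρ (l + u) ^ P * w l) * Y ^ (P/P') := by
        rw [lintegral_mul_const'' _ ((meas_prod.lintegral_prod_right').aemeasurable)]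
    _ = (∫⁻ l, ∫⁻ u, ρ (l + u) ^ P * w l) * Y ^ (P/P') := by
        rw [lintegral_lintegral_swap meas_prod.aemeasurable]
    _ = (∫⁻ l, w l * ∫⁻ u, ρ (l + u) ^ P) * Y ^ (P/P') := by
        refine congrArg (· * _) (lintegral_congr fun l => ?_)
        have hm : Measurable fun u : EuclideanSpace ℝ (Fin d) => ρ (l + u) ^ P :=
          (hρ.comp (measurable_const.add measurable_id)).pow_const P
        rw [lintegral_mul_const'' _ hm.aemeasurable, mul_comm]
    _ = (∫⁻ l, w l * R) * Y ^ (P/P') := by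
        refine congrArg (· * _) (lintegral_congr fun l => ?_)
        rw [lintegral_add_left_eq_self (fun x => ρ x ^ P) l]
    _ = R * Y ^ (1 + P/P') := by
        rw [lintegral_mul_const'' _ hw.aemeasurable, ENNReal.rpow_add_of_nonneg _ _ zero_le_one
          (by positivity), ENNReal.rpow_one]
        ring
    _ = R * Y ^ P := by
        congr 1
        have : 1 + P/P' = P := by
          have := hpq.div_conj_eq_sub_one
          rw [this]; ring
        rw [this]

lemma master {d p : ℕ} (hp2 : 2 ≤ p) {q : ℝ} (hq : 1 / (p : ℝ) + 1 / q = 1)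
    (Q f g h : EuclideanSpace ℝ (Fin d) → ℝ) (hQm : Measurable Q) (hQ0 : ∀ l, 0 ≤ Q l)
    (hfm : Measurable f) (hgm : Measurable g) (hhm : Measurable h) :
    (∫⁻ l, ∫⁻ γ, ENNReal.ofReal |h l| * ENNReal.ofReal (Real.sqrt (Q l)) *
        ENNReal.ofReal (f (γ - l)) * ENNReal.ofReal (Real.sqrt (Q γ)) * ENNReal.ofReal |g γ|)
      ≤ (∫⁻ x, ENNReal.ofReal (f x) ^ q) ^ (1/q) *
        ((∫⁻ x, ENNReal.ofReal (Q x) ^ (p:ℝ)) ^ (1/(p:ℝ)) *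
         ((∫⁻ x, ENNReal.ofReal |h x| ^ (2:ℝ)) ^ ((2:ℝ)⁻¹) *
          (∫⁻ x, ENNReal.ofReal |g x| ^ (2:ℝ)) ^ ((2:ℝ)⁻¹))) := by
  -- exponent facts
  have hpR : (2:ℝ) ≤ (p:ℝ) := by exact_mod_cast hp2
  have hP1 : (1:ℝ) < (p:ℝ) := by linarith
  have hP0 : (0:ℝ) < (p:ℝ) := by linarith
  have hq0 : 0 < 1/q := by
    have h1 : 1/(p:ℝ) < 1 := by rw [div_lt_one hP0]; linarith
    linarith
  have hqpos : 0 < q := one_div_pos.mp hq0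
  have hq1 : 1 < q := by
    have : 1/q < 1 := by
      have : 0 < 1/(p:ℝ) := by positivity
      linarith
    rw [div_lt_iff₀ hqpos, one_mul] at this
    exact this
  have conj : q.HolderConjugate (p:ℝ) := by
    rw [Real.holderConjugate_iff]
    constructor
    · exact hq1
    · rw [← one_div, ← one_div]; linarith
  have conj2 : (2:ℝ).HolderConjugate 2 := by rw [Real.holderConjugate_iff]; constructor <;> norm_num
  -- notation
  set μ : Measure (EuclideanSpace ℝ (Fin d)) := volume with hμ
  set Hn : EuclideanSpace ℝ (Fin d) → ℝ≥0∞ := fun x => ENNReal.ofReal |h x| with hHn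
  set Gn : EuclideanSpace ℝ (Fin d) → ℝ≥0∞ := fun x => ENNReal.ofReal |g x| with hGn
  set S : EuclideanSpace ℝ (Fin d) → ℝ≥0∞ := fun x => ENNReal.ofReal (Real.sqrt (Q x)) with hS
  set φ : EuclideanSpace ℝ (Fin d) → ℝ≥0∞ := fun x => ENNReal.ofReal (f x) with hφ
  set qQ : EuclideanSpace ℝ (Fin d) → ℝ≥0∞ := fun x => ENNReal.ofReal (Q x) with hqQ
  have hHm : Measurable Hn := hhm.abs.ennreal_ofReal
  have hGm : Measurable Gn := hgm.abs.ennreal_ofReal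
  have hSm : Measurable S := (Real.continuous_sqrt.measurable.comp hQm).ennreal_ofReal
  have hφm : Measurable φ := hfm.ennreal_ofReal
  have hqQm : Measurable qQ := hQm.ennreal_ofReal
  have hS2 : ∀ x, S x ^ (2:ℝ) = qQ x := fun x => by
    rw [hS, hqQ]
    rw [ENNReal.ofReal_rpow_of_nonneg (Real.sqrt_nonneg _) (by norm_num)]
    congr 1
    rw [Real.rpow_two, Real.sq_sqrt (hQ0 x)]
  -- quantities
  set Φ : ℝ≥0∞ := ∫⁻ x, φ x ^ q ∂μ with hΦ
  set R : ℝ≥0∞ := ∫⁻ x, qQ x ^ (p:ℝ) ∂μ with hRdef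
  set Yh : ℝ≥0∞ := ∫⁻ x, Hn x ^ (2:ℝ) ∂μ with hYh
  set Yg : ℝ≥0∞ := ∫⁻ x, Gn x ^ (2:ℝ) ∂μ with hYg
  set F : EuclideanSpace ℝ (Fin d) → ℝ≥0∞ :=
    fun u => ∫⁻ l, (Hn l * S (l + u)) * (S l * Gn (l + u)) ∂μ with hF
  set A : EuclideanSpace ℝ (Fin d) → ℝ≥0∞ :=
    fun u => ∫⁻ l, qQ (l + u) * Hn l ^ (2:ℝ) ∂μ with hA
  set B : EuclideanSpace ℝ (Fin d) → ℝ≥0∞ :=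
    fun u => ∫⁻ l, qQ l * Gn (l + u) ^ (2:ℝ) ∂μ with hB
  have hFm : Measurable F := by
    apply Measurable.lintegral_prod_right'
      (f := fun z : EuclideanSpace ℝ (Fin d) × EuclideanSpace ℝ (Fin d) =>
        (Hn z.2 * S (z.2 + z.1)) * (S z.2 * Gn (z.2 + z.1)))
    exact ((hHm.comp measurable_snd).mul (hSm.comp (measurable_snd.add measurable_fst))).mul
      ((hSm.comp measurable_snd).mul (hGm.comp (measurable_snd.add measurable_fst)))
  have hAm : Measurable A := by
    apply Measurable.lintegral_prod_right'
      (f := fun z : EuclideanSpace ℝ (Fin d) × EuclideanSpace ℝ (Fin d) =>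
        qQ (z.2 + z.1) * Hn z.2 ^ (2:ℝ))
    exact (hqQm.comp (measurable_snd.add measurable_fst)).mul ((hHm.comp measurable_snd).pow_const _)
  have hBm : Measurable B := by
    apply Measurable.lintegral_prod_right'
      (f := fun z : EuclideanSpace ℝ (Fin d) × EuclideanSpace ℝ (Fin d) =>
        qQ z.2 * Gn (z.2 + z.1) ^ (2:ℝ))
    exact (hqQm.comp measurable_snd).mul ((hGm.comp (measurable_snd.add measurable_fst)).pow_const _)
  -- Step 1: rewrite L as ∫⁻ u, φ u * F u
  have step1 : (∫⁻ l, ∫⁻ γ, Hn l * S l * φ (γ - l) * S γ * Gn γ ∂μ ∂μ)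
      = ∫⁻ u, φ u * F u ∂μ := by
    have inner_eq : ∀ l, (∫⁻ γ, Hn l * S l * φ (γ - l) * S γ * Gn γ ∂μ)
        = ∫⁻ u, φ u * ((Hn l * S (l + u)) * (S l * Gn (l + u))) ∂μ := by
      intro l
      rw [← lintegral_add_left_eq_self (fun γ => Hn l * S l * φ (γ - l) * S γ * Gn γ) l]
      refine lintegral_congr fun u => ?_
      simp only [add_sub_cancel_left]
      ring
    calc (∫⁻ l, ∫⁻ γ, Hn l * S l * φ (γ - l) * S γ * Gn γ ∂μ ∂μ)
        = ∫⁻ l, ∫⁻ u, φ u * ((Hn l * S (l + u)) * (S l * Gn (l + u))) ∂μ ∂μ := by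
          exact lintegral_congr inner_eq
      _ = ∫⁻ u, ∫⁻ l, φ u * ((Hn l * S (l + u)) * (S l * Gn (l + u))) ∂μ ∂μ := by
          apply lintegral_lintegral_swap
          apply Measurable.aemeasurable
          exact (hφm.comp measurable_snd).mul
            (((hHm.comp measurable_fst).mul (hSm.comp (measurable_fst.add measurable_snd))).mul
             ((hSm.comp measurable_fst).mul (hGm.comp (measurable_fst.add measurable_snd))))
      _ = ∫⁻ u, φ u * F u ∂μ := by
          refine lintegral_congr fun u => ?_
          rw [lintegral_const_mul' _ _ ENNReal.ofReal_ne_top]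
  -- Step 2: Hölder in u
  have step2 : (∫⁻ u, φ u * F u ∂μ) ≤ Φ ^ (1/q) * (∫⁻ u, F u ^ (p:ℝ) ∂μ) ^ (1/(p:ℝ)) := by
    have := ENNReal.lintegral_mul_le_Lp_mul_Lq μ conj hφm.aemeasurable hFm.aemeasurable
    simpa using this
  -- Step 3: Cauchy-Schwarz pointwise: F u ≤ A u ^ (1/2) * B u ^ (1/2)
  have step3 : ∀ u, F u ≤ A u ^ ((2:ℝ)⁻¹) * B u ^ ((2:ℝ)⁻¹) := by
    intro u
    have hm1 : AEMeasurable (fun l => Hn l * S (l + u)) μ :=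
      (hHm.mul (hSm.comp (measurable_id.add_const u))).aemeasurable
    have hm2 : AEMeasurable (fun l => S l * Gn (l + u)) μ :=
      (hSm.mul (hGm.comp (measurable_id.add_const u))).aemeasurable
    have H := ENNReal.lintegral_mul_le_Lp_mul_Lq μ conj2 hm1 hm2
    have e1 : (∫⁻ l, (Hn l * S (l + u)) ^ (2:ℝ) ∂μ) = A u := by
      refine lintegral_congr fun l => ?_
      rw [ENNReal.mul_rpow_of_nonneg _ _ (by norm_num : (0:ℝ) ≤ 2), hS2, mul_comm]
    have e2 : (∫⁻ l, (S l * Gn (l + u)) ^ (2:ℝ) ∂μ) = B u := by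
      refine lintegral_congr fun l => ?_
      rw [ENNReal.mul_rpow_of_nonneg _ _ (by norm_num : (0:ℝ) ≤ 2), hS2]
    calc F u = ∫⁻ l, ((fun l => Hn l * S (l + u)) * fun l => S l * Gn (l + u)) l ∂μ := rfl
      _ ≤ (∫⁻ l, (Hn l * S (l + u)) ^ (2:ℝ) ∂μ) ^ (1/(2:ℝ)) *
          (∫⁻ l, (S l * Gn (l + u)) ^ (2:ℝ) ∂μ) ^ (1/(2:ℝ)) := H
      _ = A u ^ ((2:ℝ)⁻¹) * B u ^ ((2:ℝ)⁻¹) := by rw [e1, e2, one_div]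
  -- Step 4: ∫ F^p ≤ (∫ A^p)^(1/2) * (∫ B^p)^(1/2)
  have step4 : (∫⁻ u, F u ^ (p:ℝ) ∂μ)
      ≤ (∫⁻ u, A u ^ (p:ℝ) ∂μ) ^ ((2:ℝ)⁻¹) * (∫⁻ u, B u ^ (p:ℝ) ∂μ) ^ ((2:ℝ)⁻¹) := by
    have hm1 : AEMeasurable (fun u => A u ^ ((p:ℝ)/2)) μ := (hAm.pow_const _).aemeasurable
    have hm2 : AEMeasurable (fun u => B u ^ ((p:ℝ)/2)) μ := (hBm.pow_const _).aemeasurable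
    have H := ENNReal.lintegral_mul_le_Lp_mul_Lq μ conj2 hm1 hm2
    calc (∫⁻ u, F u ^ (p:ℝ) ∂μ)
        ≤ ∫⁻ u, ((fun u => A u ^ ((p:ℝ)/2)) * fun u => B u ^ ((p:ℝ)/2)) u ∂μ := by
          refine lintegral_mono fun u => ?_
          have := ENNReal.rpow_le_rpow (step3 u) hP0.le
          rw [ENNReal.mul_rpow_of_nonneg _ _ hP0.le, ← ENNReal.rpow_mul, ← ENNReal.rpow_mul]
            at this
          simpa [inv_mul_eq_div] using this
      _ ≤ (∫⁻ u, (A u ^ ((p:ℝ)/2)) ^ (2:ℝ) ∂μ) ^ (1/(2:ℝ)) *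
          (∫⁻ u, (B u ^ ((p:ℝ)/2)) ^ (2:ℝ) ∂μ) ^ (1/(2:ℝ)) := H
      _ = (∫⁻ u, A u ^ (p:ℝ) ∂μ) ^ ((2:ℝ)⁻¹) * (∫⁻ u, B u ^ (p:ℝ) ∂μ) ^ ((2:ℝ)⁻¹) := by
          rw [one_div]
          congr 2 <;>
          · refine lintegral_congr fun u => ?_
            rw [← ENNReal.rpow_mul]
            norm_num
  -- Step 5: Jensen for A
  have step5 : (∫⁻ u, A u ^ (p:ℝ) ∂μ) ≤ R * Yh ^ (p:ℝ) :=
    jensen_step hP1 qQ (fun l => Hn l ^ (2:ℝ)) hqQm (hHm.pow_const _)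
  -- Step 6: Jensen for B
  have step6 : (∫⁻ u, B u ^ (p:ℝ) ∂μ) ≤ R * Yg ^ (p:ℝ) := by
    have hBt : ∀ u, B u = ∫⁻ m, qQ (m + (-u)) * Gn m ^ (2:ℝ) ∂μ := by
      intro u
      rw [← lintegral_add_right_eq_self (fun m => qQ (m + (-u)) * Gn m ^ (2:ℝ)) u]
      refine lintegral_congr fun l => ?_
      simp [add_assoc]
    have hmeas : Measurable fun v => (∫⁻ m, qQ (m + v) * Gn m ^ (2:ℝ) ∂μ) ^ (p:ℝ) := by
      apply Measurable.pow_const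
      apply Measurable.lintegral_prod_right'
        (f := fun z : EuclideanSpace ℝ (Fin d) × EuclideanSpace ℝ (Fin d) =>
          qQ (z.2 + z.1) * Gn z.2 ^ (2:ℝ))
      exact (hqQm.comp (measurable_snd.add measurable_fst)).mul
        ((hGm.comp measurable_snd).pow_const _)
    calc (∫⁻ u, B u ^ (p:ℝ) ∂μ)
        = ∫⁻ u, (∫⁻ m, qQ (m + (-u)) * Gn m ^ (2:ℝ) ∂μ) ^ (p:ℝ) ∂μ := by
          refine lintegral_congr fun u => ?_; rw [hBt]
      _ = ∫⁻ v, (∫⁻ m, qQ (m + v) * Gn m ^ (2:ℝ) ∂μ) ^ (p:ℝ) ∂μ := by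
          exact (Measure.measurePreserving_neg μ).lintegral_comp hmeas
      _ ≤ R * Yg ^ (p:ℝ) :=
          jensen_step hP1 qQ (fun l => Gn l ^ (2:ℝ)) hqQm (hGm.pow_const _)
  -- combine
  rw [step1]
  refine le_trans step2 ?_
  refine mul_le_mul_right ?_ _
  have : (∫⁻ u, F u ^ (p:ℝ) ∂μ) ^ (1/(p:ℝ))
      ≤ ((R * Yh ^ (p:ℝ)) ^ ((2:ℝ)⁻¹) * (R * Yg ^ (p:ℝ)) ^ ((2:ℝ)⁻¹)) ^ (1/(p:ℝ)) := by
    refine ENNReal.rpow_le_rpow ?_ (by positivity)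
    refine le_trans step4 ?_
    exact mul_le_mul' (ENNReal.rpow_le_rpow step5 (by positivity))
      (ENNReal.rpow_le_rpow step6 (by positivity))
  exact le_trans this (le_of_eq (alg_helper hP0 R Yh Yg))

theorem stmt6 (d p : ℕ) (hd : 0 < d) (hp : 1 ≤ p) (q : ℝ) (hq : 1 / (p : ℝ) + 1 / q = 1)
    (Q : EuclideanSpace ℝ (Fin d) → ℝ) (hQm : Measurable Q)
    (hQ01 : ∀ l, Q l ∈ Set.Icc (0 : ℝ) 1)
    (hQp : Integrable fun l => Q l ^ p)
    (f : EuclideanSpace ℝ (Fin d) → ℝ) (hf0 : ∀ l, 0 ≤ f l) (hfc : Continuous f)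
    (hfe : ∀ l, f (-l) = f l) (hfq : (∫ l, f l ^ q) = 1)
    (g h : EuclideanSpace ℝ (Fin d) → ℝ) (hg : MemLp g 2) (hh : MemLp h 2) :
    (∫ l, h l * (Real.sqrt (Q l) * ∫ γ, f (γ - l) * Real.sqrt (Q γ) * g γ))
        ≤ (∫ l, Q l ^ p) ^ (1 / (p : ℝ)) * (∫ l, g l ^ 2) ^ (1 / 2 : ℝ) *
            (∫ l, h l ^ 2) ^ (1 / 2 : ℝ)
      ∧ (∫ l, h l * (Real.sqrt (Q l) * ∫ γ, f (γ - l) * Real.sqrt (Q γ) * g γ))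
        = ∫ l, g l * (Real.sqrt (Q l) * ∫ γ, f (γ - l) * Real.sqrt (Q γ) * h γ) := by
  classical
  rcases eq_or_lt_of_le hp with hp1 | hp2
  · -- p = 1: contradiction from hfq
    exfalso
    have hq0 : q = 0 := by
      rw [← hp1] at hq; norm_num at hq; exact hq
    rw [hq0] at hfq
    simp only [Real.rpow_zero] at hfq
    haveI : Nonempty (Fin d) := ⟨⟨0, hd⟩⟩
    have htop : (volume : Measure (EuclideanSpace ℝ (Fin d))) Set.univ = ⊤ :=
      measure_univ_of_isAddLeftInvariant volume
    rw [integral_const, smul_eq_mul, mul_one, measureReal_def, htop] at hfq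
    simp at hfq
  · -- 2 ≤ p
    have hp2' : 2 ≤ p := hp2
    have hQ0 : ∀ l, 0 ≤ Q l := fun l => (hQ01 l).1
    have hpR : (2:ℝ) ≤ (p:ℝ) := by exact_mod_cast hp2'
    have hP0 : (0:ℝ) < (p:ℝ) := by linarith
    have hq0 : 0 < 1/q := by
      have h1 : 1/(p:ℝ) < 1 := by rw [div_lt_one hP0]; linarith
      linarith
    have hqpos : 0 < q := one_div_pos.mp hq0
    -- measurable representatives
    have hgae := hg.aestronglyMeasurable.aemeasurable
    have hhae := hh.aestronglyMeasurable.aemeasurable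
    set g' : EuclideanSpace ℝ (Fin d) → ℝ := hgae.mk g with hg'def
    set h' : EuclideanSpace ℝ (Fin d) → ℝ := hhae.mk h with hh'def
    have hg'm : Measurable g' := hgae.measurable_mk
    have hh'm : Measurable h' := hhae.measurable_mk
    have hgg' : g =ᵐ[volume] g' := hgae.ae_eq_mk
    have hhh' : h =ᵐ[volume] h' := hhae.ae_eq_mk
    have hg'2 : MemLp g' 2 := hg.ae_eq hgg'
    have hh'2 : MemLp h' 2 := hh.ae_eq hhh'
    -- integral conversions
    have hg'sq : Integrable (fun x => g' x ^ 2) := hg'2.integrable_sq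
    have hh'sq : Integrable (fun x => h' x ^ 2) := hh'2.integrable_sq
    have hgsq_eq : (∫ x, g x ^ 2) = ∫ x, g' x ^ 2 :=
      integral_congr_ae (hgg'.mono fun x hx => by simp only [hx])
    have hhsq_eq : (∫ x, h x ^ 2) = ∫ x, h' x ^ 2 :=
      integral_congr_ae (hhh'.mono fun x hx => by simp only [hx])
    -- lintegral computations
    have hΦ : (∫⁻ x, ENNReal.ofReal (f x) ^ q) = 1 := by
      have hfqc : Continuous fun x => f x ^ q :=
        hfc.rpow_const fun x => Or.inr hqpos.le
      have hint : Integrable (fun x => f x ^ q) := by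
        by_contra hni
        rw [integral_undef hni] at hfq
        norm_num at hfq
      have h2 := ofReal_integral_eq_lintegral_ofReal hint
        (Filter.Eventually.of_forall fun x => Real.rpow_nonneg (hf0 x) q)
      rw [hfq] at h2
      calc (∫⁻ x, ENNReal.ofReal (f x) ^ q)
          = ∫⁻ x, ENNReal.ofReal (f x ^ q) := lintegral_congr fun x =>
            ENNReal.ofReal_rpow_of_nonneg (hf0 x) hqpos.le
        _ = ENNReal.ofReal 1 := h2.symm
        _ = 1 := by norm_num
    have hR : (∫⁻ x, ENNReal.ofReal (Q x) ^ ((p:ℕ):ℝ)) = ENNReal.ofReal (∫ x, Q x ^ p) := by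
      have h2 := ofReal_integral_eq_lintegral_ofReal hQp
        (Filter.Eventually.of_forall fun x => pow_nonneg (hQ0 x) p)
      rw [h2]
      refine lintegral_congr fun x => ?_
      rw [ENNReal.rpow_natCast, ← ENNReal.ofReal_pow (hQ0 x)]
    have hYh : (∫⁻ x, ENNReal.ofReal |h' x| ^ (2:ℝ)) = ENNReal.ofReal (∫ x, h x ^ 2) := by
      rw [hhsq_eq]
      have h2 := ofReal_integral_eq_lintegral_ofReal hh'sq
        (Filter.Eventually.of_forall fun x => sq_nonneg (h' x))
      rw [h2]
      refine lintegral_congr fun x => ?_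
      rw [ENNReal.rpow_two, ← ENNReal.ofReal_pow (abs_nonneg _), sq_abs]
    have hYg : (∫⁻ x, ENNReal.ofReal |g' x| ^ (2:ℝ)) = ENNReal.ofReal (∫ x, g x ^ 2) := by
      rw [hgsq_eq]
      have h2 := ofReal_integral_eq_lintegral_ofReal hg'sq
        (Filter.Eventually.of_forall fun x => sq_nonneg (g' x))
      rw [h2]
      refine lintegral_congr fun x => ?_
      rw [ENNReal.rpow_two, ← ENNReal.ofReal_pow (abs_nonneg _), sq_abs]
    -- nonnegativity
    have hQint_nn : 0 ≤ ∫ x, Q x ^ p := integral_nonneg fun x => pow_nonneg (hQ0 x) p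
    have hgsq_nn : 0 ≤ ∫ x, g x ^ 2 := integral_nonneg fun x => sq_nonneg _
    have hhsq_nn : 0 ≤ ∫ x, h x ^ 2 := integral_nonneg fun x => sq_nonneg _
    set RHSr : ℝ := (∫ l, Q l ^ p) ^ (1/(p:ℝ)) * (∫ l, g l ^ 2) ^ (1/2:ℝ) *
      (∫ l, h l ^ 2) ^ (1/2:ℝ) with hRHSr
    have hRHSr_nn : 0 ≤ RHSr := by
      apply mul_nonneg (mul_nonneg _ _)
      · exact Real.rpow_nonneg hhsq_nn _
      · exact Real.rpow_nonneg hQint_nn _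
      · exact Real.rpow_nonneg hgsq_nn _
    -- master bounds
    have key1 := master hp2' hq Q f g' h' hQm hQ0 hfc.measurable hg'm hh'm
    have key2 := master hp2' hq Q f h' g' hQm hQ0 hfc.measurable hh'm hg'm
    rw [hΦ, hR, hYh, hYg] at key1
    rw [hΦ, hR, hYh, hYg] at key2
    rw [ENNReal.one_rpow, one_mul] at key1 key2
    have hbound : ENNReal.ofReal (∫ x, Q x ^ p) ^ (1/(p:ℝ)) *
        (ENNReal.ofReal (∫ x, h x ^ 2) ^ ((2:ℝ)⁻¹) *
         ENNReal.ofReal (∫ x, g x ^ 2) ^ ((2:ℝ)⁻¹)) = ENNReal.ofReal RHSr := by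
      rw [ENNReal.ofReal_rpow_of_nonneg hQint_nn (by positivity),
        ENNReal.ofReal_rpow_of_nonneg hhsq_nn (by norm_num),
        ENNReal.ofReal_rpow_of_nonneg hgsq_nn (by norm_num),
        ← ENNReal.ofReal_mul (by positivity), ← ENNReal.ofReal_mul (by positivity)]
      rw [hRHSr]
      congr 1
      rw [show ((2:ℝ)⁻¹) = (1/2:ℝ) by norm_num]
      ring
    have hbound2 : ENNReal.ofReal (∫ x, Q x ^ p) ^ (1/(p:ℝ)) *
        (ENNReal.ofReal (∫ x, g x ^ 2) ^ ((2:ℝ)⁻¹) *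
         ENNReal.ofReal (∫ x, h x ^ 2) ^ ((2:ℝ)⁻¹)) = ENNReal.ofReal RHSr := by
      rw [← hbound]; ring
    rw [hbound] at key1
    rw [hbound2] at key2
    -- kernel integrability
    set Pf : (EuclideanSpace ℝ (Fin d) × EuclideanSpace ℝ (Fin d)) → ℝ :=
      fun z => h' z.1 * Real.sqrt (Q z.1) * f (z.2 - z.1) * Real.sqrt (Q z.2) * g' z.2 with hPfdef
    set P2 : (EuclideanSpace ℝ (Fin d) × EuclideanSpace ℝ (Fin d)) → ℝ :=
      fun z => g' z.1 * Real.sqrt (Q z.1) * f (z.2 - z.1) * Real.sqrt (Q z.2) * h' z.2 with hP2def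
    have hsqm : Measurable fun x : EuclideanSpace ℝ (Fin d) => Real.sqrt (Q x) :=
      Real.continuous_sqrt.measurable.comp hQm
    have hPfm : Measurable Pf := by
      apply Measurable.mul
      apply Measurable.mul
      apply Measurable.mul
      apply Measurable.mul
      · exact hh'm.comp measurable_fst
      · exact hsqm.comp measurable_fst
      · exact (hfc.measurable).comp (measurable_snd.sub measurable_fst)
      · exact hsqm.comp measurable_snd
      · exact hg'm.comp measurable_snd
    have hP2m : Measurable P2 := by
      apply Measurable.mul
      apply Measurable.mul
      apply Measurable.mul
      apply Measurable.mul
      · exact hg'm.comp measurable_fst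
      · exact hsqm.comp measurable_fst
      · exact (hfc.measurable).comp (measurable_snd.sub measurable_fst)
      · exact hsqm.comp measurable_snd
      · exact hh'm.comp measurable_snd
    have ofReal5 : ∀ a b c e k : ℝ, 0 ≤ a → 0 ≤ b → 0 ≤ c → 0 ≤ e →
        ENNReal.ofReal (a*b*c*e*k) = ENNReal.ofReal a * ENNReal.ofReal b *
          ENNReal.ofReal c * ENNReal.ofReal e * ENNReal.ofReal k := by
      intro a b c e k ha hb hc he
      rw [ENNReal.ofReal_mul (by positivity), ENNReal.ofReal_mul (by positivity),
        ENNReal.ofReal_mul (by positivity), ENNReal.ofReal_mul ha]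
    have habs : ∀ z, (‖Pf z‖₊ : ℝ≥0∞) = ENNReal.ofReal |h' z.1| *
        ENNReal.ofReal (Real.sqrt (Q z.1)) * ENNReal.ofReal (f (z.2 - z.1)) *
        ENNReal.ofReal (Real.sqrt (Q z.2)) * ENNReal.ofReal |g' z.2| := by
      intro z
      rw [← enorm_eq_nnnorm, Real.enorm_eq_ofReal_abs, hPfdef]
      simp only [abs_mul, abs_of_nonneg (Real.sqrt_nonneg _), abs_of_nonneg (hf0 _)]
      exact ofReal5 _ _ _ _ _ (abs_nonneg _) (Real.sqrt_nonneg _) (hf0 _) (Real.sqrt_nonneg _)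
    have habs2 : ∀ z, (‖P2 z‖₊ : ℝ≥0∞) = ENNReal.ofReal |g' z.1| *
        ENNReal.ofReal (Real.sqrt (Q z.1)) * ENNReal.ofReal (f (z.2 - z.1)) *
        ENNReal.ofReal (Real.sqrt (Q z.2)) * ENNReal.ofReal |h' z.2| := by
      intro z
      rw [← enorm_eq_nnnorm, Real.enorm_eq_ofReal_abs, hP2def]
      simp only [abs_mul, abs_of_nonneg (Real.sqrt_nonneg _), abs_of_nonneg (hf0 _)]
      exact ofReal5 _ _ _ _ _ (abs_nonneg _) (Real.sqrt_nonneg _) (hf0 _) (Real.sqrt_nonneg _)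
    have hlint1 : (∫⁻ z, (‖Pf z‖₊ : ℝ≥0∞) ∂(volume.prod volume)) ≤ ENNReal.ofReal RHSr := by
      rw [lintegral_congr habs]
      rw [lintegral_prod _ (by fun_prop)]
      exact key1
    have hlint2 : (∫⁻ z, (‖P2 z‖₊ : ℝ≥0∞) ∂(volume.prod volume)) ≤ ENNReal.ofReal RHSr := by
      rw [lintegral_congr habs2]
      rw [lintegral_prod _ (by fun_prop)]
      exact key2
    have hPfInt : Integrable Pf (volume.prod volume) :=
      ⟨hPfm.aestronglyMeasurable, lt_of_le_of_lt hlint1 ENNReal.ofReal_lt_top⟩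
    have hP2Int : Integrable P2 (volume.prod volume) :=
      ⟨hP2m.aestronglyMeasurable, lt_of_le_of_lt hlint2 ENNReal.ofReal_lt_top⟩
    -- identify LHS with the double integral
    have hinnerg : ∀ l, (∫ γ, f (γ - l) * Real.sqrt (Q γ) * g γ)
        = ∫ γ, f (γ - l) * Real.sqrt (Q γ) * g' γ := fun l =>
      integral_congr_ae (hgg'.mono fun γ e => by simp only [e])
    have hinnerh : ∀ l, (∫ γ, f (γ - l) * Real.sqrt (Q γ) * h γ)
        = ∫ γ, f (γ - l) * Real.sqrt (Q γ) * h' γ := fun l =>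
      integral_congr_ae (hhh'.mono fun γ e => by simp only [e])
    have hLHS : (∫ l, h l * (Real.sqrt (Q l) * ∫ γ, f (γ - l) * Real.sqrt (Q γ) * g γ))
        = ∫ z, Pf z ∂(volume.prod volume) := by
      have e1 : (∫ l, h l * (Real.sqrt (Q l) * ∫ γ, f (γ - l) * Real.sqrt (Q γ) * g γ))
          = ∫ l, ∫ γ, Pf (l, γ) := by
        refine integral_congr_ae (hhh'.mono fun l e => ?_)
        show h l * (Real.sqrt (Q l) * ∫ γ, f (γ - l) * Real.sqrt (Q γ) * g γ)
          = ∫ γ, Pf (l, γ)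
        rw [hinnerg l, e]
        calc h' l * (Real.sqrt (Q l) * ∫ γ, f (γ - l) * Real.sqrt (Q γ) * g' γ)
            = (h' l * Real.sqrt (Q l)) * ∫ γ, f (γ - l) * Real.sqrt (Q γ) * g' γ := by ring
          _ = ∫ γ, (h' l * Real.sqrt (Q l)) * (f (γ - l) * Real.sqrt (Q γ) * g' γ) :=
              (integral_const_mul _ _).symm
          _ = ∫ γ, Pf (l, γ) := by
              refine integral_congr_ae (Filter.Eventually.of_forall fun γ => ?_)
              show (h' l * Real.sqrt (Q l)) * (f (γ - l) * Real.sqrt (Q γ) * g' γ) = Pf (l, γ)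
              rw [hPfdef]; ring
      rw [e1]
      exact integral_integral (f := fun a b => Pf (a, b)) (by exact hPfInt)
    have hRHS2 : (∫ l, g l * (Real.sqrt (Q l) * ∫ γ, f (γ - l) * Real.sqrt (Q γ) * h γ))
        = ∫ z, P2 z ∂(volume.prod volume) := by
      have e1 : (∫ l, g l * (Real.sqrt (Q l) * ∫ γ, f (γ - l) * Real.sqrt (Q γ) * h γ))
          = ∫ l, ∫ γ, P2 (l, γ) := by
        refine integral_congr_ae (hgg'.mono fun l e => ?_)
        show g l * (Real.sqrt (Q l) * ∫ γ, f (γ - l) * Real.sqrt (Q γ) * h γ)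
          = ∫ γ, P2 (l, γ)
        rw [hinnerh l, e]
        calc g' l * (Real.sqrt (Q l) * ∫ γ, f (γ - l) * Real.sqrt (Q γ) * h' γ)
            = (g' l * Real.sqrt (Q l)) * ∫ γ, f (γ - l) * Real.sqrt (Q γ) * h' γ := by ring
          _ = ∫ γ, (g' l * Real.sqrt (Q l)) * (f (γ - l) * Real.sqrt (Q γ) * h' γ) :=
              (integral_const_mul _ _).symm
          _ = ∫ γ, P2 (l, γ) := by
              refine integral_congr_ae (Filter.Eventually.of_forall fun γ => ?_)
              show (g' l * Real.sqrt (Q l)) * (f (γ - l) * Real.sqrt (Q γ) * h' γ) = P2 (l, γ)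
              rw [hP2def]; ring
      rw [e1]
      exact integral_integral (f := fun a b => P2 (a, b)) (by exact hP2Int)
    constructor
    · -- the inequality
      rw [hLHS]
      refine le_trans (integral_mono hPfInt hPfInt.abs fun z => le_abs_self _) ?_
      have h3 := ofReal_integral_eq_lintegral_ofReal hPfInt.abs
        (Filter.Eventually.of_forall fun z => abs_nonneg _)
      have h4 : (∫⁻ z, ENNReal.ofReal |Pf z| ∂(volume.prod volume))
          = ∫⁻ z, (‖Pf z‖₊ : ℝ≥0∞) ∂(volume.prod volume) :=
        lintegral_congr fun z => by rw [← enorm_eq_nnnorm, Real.enorm_eq_ofReal_abs]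
      have h5 : ENNReal.ofReal (∫ z, |Pf z| ∂(volume.prod volume)) ≤ ENNReal.ofReal RHSr := by
        rw [h3, h4]; exact hlint1
      exact (ENNReal.ofReal_le_ofReal_iff hRHSr_nn).1 h5
    · -- the symmetry
      rw [hLHS, hRHS2]
      have swap_eq : ∀ z : EuclideanSpace ℝ (Fin d) × EuclideanSpace ℝ (Fin d),
          P2 (Prod.swap z) = Pf z := by
        intro z
        have e1 : P2 (Prod.swap z)
            = g' z.2 * Real.sqrt (Q z.2) * f (z.1 - z.2) * Real.sqrt (Q z.1) * h' z.1 := rfl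
        have e2 : Pf z
            = h' z.1 * Real.sqrt (Q z.1) * f (z.2 - z.1) * Real.sqrt (Q z.2) * g' z.2 := rfl
        rw [e1, e2, show z.1 - z.2 = -(z.2 - z.1) from (neg_sub _ _).symm, hfe]
        ring
      calc (∫ z, Pf z ∂(volume.prod volume))
          = ∫ z, P2 (Prod.swap z) ∂(volume.prod volume) := by
            refine integral_congr_ae (Filter.Eventually.of_forall fun z => ?_)
            exact (swap_eq z).symm
        _ = ∫ z, P2 z ∂(volume.prod volume) := integral_prod_swap P2
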